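/- Let M and M' be n×n real symmetric matrices, and let 1 ≤ r < n. Let θ_1, …, θ_n denote the eigenvalues of M' ordered by decreasing absolute value, |θ_1| ≥ |θ_2| ≥ … ≥ |θ_n|, and let u'_1, …, u'_r be orthonormal eigenvectors of M' with M' u'_k = θ_k u'_k for k = 1, …, r. Similarly, let u_1, …, u_r be orthonormal eigenvectors of M associated with its r eigenvalues of largest absolute value. Set U = [u_1, …, u_r] and U' = [u'_1, …, u'_r] (the n×r matrices with these columns). If |θ_r| − |θ_{r+1}| − ‖M − M'‖ > 0, then there exists an r×r orthogonal matrix O such that ‖U − U'O‖ ≤ √2·‖M − M'‖ / (|θ_r| − |θ_{r+1}| − ‖M − M'‖). -/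

import Mathlib

open Matrix
open scoped Matrix.Norms.L2Operator

set_option linter.unusedSectionVars false
set_option linter.unusedVariables false
set_option maxHeartbeats 1000000
namespace DKaux

variable {p q s : Type*} [Fintype p] [Fintype q] [Fintype s] [DecidableEq p] [DecidableEq q] [DecidableEq s]

lemma euc_norm_sq (v : p → ℝ) : ‖(WithLp.equiv 2 (p → ℝ)).symm v‖ ^ 2 = v ⬝ᵥ v := by
  rw [EuclideanSpace.norm_eq, Real.sq_sqrt (by positivity)]
  simp [dotProduct, sq, Real.norm_eq_abs, abs_mul_abs_self]

lemma euc_norm_eq (v : p → ℝ) : ‖(WithLp.equiv 2 (p → ℝ)).symm v‖ = Real.sqrt (v ⬝ᵥ v) := by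
  rw [← euc_norm_sq v, Real.sqrt_sq (norm_nonneg _)]

lemma dot_nonneg (v : p → ℝ) : 0 ≤ v ⬝ᵥ v :=
  Finset.sum_nonneg fun i _ => mul_self_nonneg _

lemma norm_le_of (A : Matrix p q ℝ) {c : ℝ} (hc : 0 ≤ c)
    (h : ∀ v : q → ℝ, (A *ᵥ v) ⬝ᵥ (A *ᵥ v) ≤ c ^ 2 * (v ⬝ᵥ v)) : ‖A‖ ≤ c := by
  rw [Matrix.l2_opNorm_def]
  refine ContinuousLinearMap.opNorm_le_bound _ hc fun x => ?_
  obtain ⟨v, rfl⟩ := (WithLp.equiv 2 (q → ℝ)).symm.surjective x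
  rw [LinearEquiv.trans_apply, LinearMap.coe_toContinuousLinearMap',
    Matrix.toEuclideanLin_apply_piLp_toLp]
  have h2 := h v
  have := Real.sqrt_le_sqrt h2
  rw [← euc_norm_eq] at this
  refine this.trans ?_
  rw [Real.sqrt_mul (by positivity), Real.sqrt_sq hc, ← euc_norm_eq]

lemma mulVec_dot_le (A : Matrix p q ℝ) (v : q → ℝ) :
    (A *ᵥ v) ⬝ᵥ (A *ᵥ v) ≤ ‖A‖ ^ 2 * (v ⬝ᵥ v) := by
  have := Matrix.l2_opNorm_mulVec A ((WithLp.equiv 2 (q → ℝ)).symm v)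
  have h1 : (EuclideanSpace.equiv p ℝ).symm (A *ᵥ (WithLp.equiv 2 (q → ℝ)).symm v)
      = (WithLp.equiv 2 (p → ℝ)).symm (A *ᵥ v) := rfl
  rw [h1, euc_norm_eq, euc_norm_eq] at this
  have h3 : Real.sqrt ((A *ᵥ v) ⬝ᵥ (A *ᵥ v)) ^ 2 ≤ (‖A‖ * Real.sqrt (v ⬝ᵥ v)) ^ 2 := by
    have h0 : (0:ℝ) ≤ Real.sqrt ((A *ᵥ v) ⬝ᵥ (A *ᵥ v)) := Real.sqrt_nonneg _
    exact pow_le_pow_left₀ h0 this 2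
  rw [Real.sq_sqrt (dot_nonneg _), mul_pow, Real.sq_sqrt (dot_nonneg _)] at h3
  exact h3

lemma mulVec_dot' (A : Matrix p q ℝ) (v : q → ℝ) (w : p → ℝ) :
    (A *ᵥ v) ⬝ᵥ w = v ⬝ᵥ (Aᵀ *ᵥ w) := by
  rw [dotProduct_comm, dotProduct_mulVec, ← Matrix.mulVec_transpose,
    dotProduct_comm]

lemma gram_dot (A : Matrix p q ℝ) (v w : q → ℝ) :
    (A *ᵥ v) ⬝ᵥ (A *ᵥ w) = v ⬝ᵥ ((Aᵀ * A) *ᵥ w) := by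
  rw [mulVec_dot', Matrix.mulVec_mulVec]

lemma isometry_dot (A : Matrix p q ℝ) (hA : Aᵀ * A = 1) (v : q → ℝ) :
    (A *ᵥ v) ⬝ᵥ (A *ᵥ v) = v ⬝ᵥ v := by
  rw [gram_dot, hA, Matrix.one_mulVec]

lemma norm_le_one_of_isometry (A : Matrix p q ℝ) (hA : Aᵀ * A = 1) : ‖A‖ ≤ 1 := by
  refine norm_le_of A zero_le_one fun v => ?_
  rw [isometry_dot A hA]; nlinarith [dot_nonneg v]

lemma sylvester (B X : Matrix p q ℝ) (d₁ : q → ℝ) (d₂ : p → ℝ) {ρ δ : ℝ} (hδ : 0 < δ) (hρ : 0 ≤ ρ)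
    (hd₁ : ∀ k, ρ + δ ≤ |d₁ k|) (hd₂ : ∀ l, |d₂ l| ≤ ρ)
    (hX : B * Matrix.diagonal d₁ - Matrix.diagonal d₂ * B = X) :
    δ * ‖B‖ ≤ ‖X‖ := by
  have hm : 0 < ρ + δ := by linarith
  have hd₁0 : ∀ k, d₁ k ≠ 0 := fun k => by
    intro h; have := hd₁ k; rw [h, abs_zero] at this; linarith
  -- step a : ‖B‖ ≤ ‖B * diagonal d₁‖ / (ρ + δ)
  have stepa : (ρ + δ) * ‖B‖ ≤ ‖B * Matrix.diagonal d₁‖ := by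
    rw [mul_comm, ← le_div_iff₀ hm]
    refine norm_le_of B (by positivity) fun v => ?_
    have hdw : Matrix.diagonal d₁ *ᵥ (fun k => v k / d₁ k) = v := by
      funext k
      rw [Matrix.mulVec_diagonal]
      rw [mul_div_assoc']
      exact mul_div_cancel_left₀ _ (hd₁0 k)
    have hv : B *ᵥ v = (B * Matrix.diagonal d₁) *ᵥ (fun k => v k / d₁ k) := by
      rw [← Matrix.mulVec_mulVec, hdw]
    rw [hv]
    refine (mulVec_dot_le _ _).trans ?_
    have hw : ((fun k => v k / d₁ k) ⬝ᵥ fun k => v k / d₁ k) ≤ (v ⬝ᵥ v) / (ρ + δ)^2 := by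
      simp only [dotProduct]
      rw [Finset.sum_div]
      refine Finset.sum_le_sum fun k _ => ?_
      have h1 : (ρ + δ)^2 ≤ (d₁ k)^2 := by
        nlinarith [hd₁ k, abs_nonneg (d₁ k), sq_abs (d₁ k)]
      have h2 : v k / d₁ k * (v k / d₁ k) = v k ^ 2 / (d₁ k)^2 := by
        rw [div_mul_div_comm, ← sq, ← sq]
      have h3 : v k * v k = v k ^ 2 := (sq (v k)).symm
      rw [h2, h3]
      gcongr
    calc ‖B * Matrix.diagonal d₁‖ ^ 2 * ((fun k => v k / d₁ k) ⬝ᵥ fun k => v k / d₁ k)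
        ≤ ‖B * Matrix.diagonal d₁‖ ^ 2 * ((v ⬝ᵥ v) / (ρ + δ)^2) :=
          mul_le_mul_of_nonneg_left hw (by positivity)
      _ = (‖B * Matrix.diagonal d₁‖ / (ρ + δ)) ^ 2 * (v ⬝ᵥ v) := by
          rw [div_pow]; ring
  have stepb : ‖Matrix.diagonal d₂ * B‖ ≤ ρ * ‖B‖ := by
    refine norm_le_of _ (by positivity) fun v => ?_
    rw [← Matrix.mulVec_mulVec]
    have h1 : (Matrix.diagonal d₂ *ᵥ (B *ᵥ v)) ⬝ᵥ (Matrix.diagonal d₂ *ᵥ (B *ᵥ v))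
        ≤ ρ^2 * ((B *ᵥ v) ⬝ᵥ (B *ᵥ v)) := by
      simp only [dotProduct]
      rw [Finset.mul_sum]
      refine Finset.sum_le_sum fun l _ => ?_
      rw [Matrix.mulVec_diagonal]
      have hsq : d₂ l ^ 2 ≤ ρ ^ 2 := by
        nlinarith [hd₂ l, abs_nonneg (d₂ l), sq_abs (d₂ l)]
      nlinarith [hsq, mul_self_nonneg ((B *ᵥ v) l)]
    refine h1.trans ?_
    have h2 := mulVec_dot_le B v
    rw [mul_pow]
    nlinarith [dot_nonneg (B *ᵥ v), sq_nonneg ρ]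
  have hc : ‖B * Matrix.diagonal d₁‖ ≤ ‖X‖ + ρ * ‖B‖ := by
    have he : B * Matrix.diagonal d₁ = X + Matrix.diagonal d₂ * B := by
      rw [← hX, sub_add_cancel]
    rw [he]
    exact (norm_add_le _ _).trans (by linarith)
  linarith


lemma fin_split {n r : ℕ} (hrn : r ≤ n) (F : Fin n → ℝ) :
    ∑ j : Fin n, F j
      = (∑ k : Fin r, F ⟨k.val, lt_of_lt_of_le k.isLt hrn⟩)
        + ∑ l : Fin (n - r), F ⟨r + l.val, by omega⟩ := by
  have h : r + (n - r) = n := by omega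
  have e := finSumFinEquiv.trans (finCongr h)
  rw [← Fintype.sum_equiv (finSumFinEquiv.trans (finCongr h)) (fun x => F _) F (fun x => rfl)]
  rw [Fintype.sum_sum_type]
  congr 1


lemma euc_inner_eq {p : Type*} [Fintype p] (x y : EuclideanSpace ℝ p) :
    (inner ℝ x y : ℝ) = (fun i => x i) ⬝ᵥ (fun i => y i) := by
  simp [PiLp.inner_apply, RCLike.inner_apply, dotProduct]
  exact Finset.sum_congr rfl fun _ _ => mul_comm _ _

lemma svd_polar {r : ℕ} (hr : 0 < r) (H : Matrix (Fin r) (Fin r) ℝ) :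
    ∃ (O : Matrix (Fin r) (Fin r) ℝ) (μ : ℝ) (qv : Fin r → ℝ),
      Oᵀ * O = 1 ∧ qv ⬝ᵥ qv = 1 ∧ (Hᵀ * H) *ᵥ qv = μ • qv ∧ 0 ≤ μ ∧
      ∀ v : Fin r → ℝ, v ⬝ᵥ (((2:ℝ) • (1 : Matrix (Fin r) (Fin r) ℝ) - Hᵀ * O - Oᵀ * H) *ᵥ v)
        ≤ (2 - 2 * Real.sqrt μ) * (v ⬝ᵥ v) := by
  classical
  have hconj : Hᴴ = Hᵀ := by ext i j; simp [Matrix.conjTranspose_apply]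
  have hS : (Hᵀ * H).IsHermitian := by
    rw [← hconj]; exact Matrix.isHermitian_conjTranspose_mul_self H
  set S := Hᵀ * H with hSdef
  set μs := hS.eigenvalues with hμs
  set qb := hS.eigenvectorBasis with hqb
  have hqb_dot : ∀ i j, (fun t => qb i t) ⬝ᵥ (fun t => qb j t) = if i = j then 1 else 0 := by
    intro i j
    rw [← euc_inner_eq]
    have := qb.orthonormal
    rw [orthonormal_iff_ite] at this
    simpa using this i j
  have heig : ∀ j, S *ᵥ (fun t => qb j t) = μs j • (fun t => qb j t) := fun j =>
    hS.mulVec_eigenvectorBasis j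
  have hdotSelf : ∀ j, (fun t => qb j t) ⬝ᵥ (fun t => qb j t) = 1 := by
    intro j; rw [hqb_dot]; simp
  -- eigenvalues are nonneg
  have hμ_eq : ∀ j, μs j = (H *ᵥ fun t => qb j t) ⬝ᵥ (H *ᵥ fun t => qb j t) := by
    intro j
    rw [gram_dot, ← hSdef, heig j, dotProduct_smul, hdotSelf]
    simp
  have hμ_nonneg : ∀ j, 0 ≤ μs j := by
    intro j; rw [hμ_eq j]
    exact Finset.sum_nonneg fun i _ => mul_self_nonneg _
  -- the minimal eigenvalue
  obtain ⟨j₀, -, hj₀⟩ := Finset.exists_min_image Finset.univ μs ⟨⟨0, hr⟩, Finset.mem_univ _⟩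
  simp only [Finset.mem_univ, forall_true_left] at hj₀
  -- candidate left singular vectors
  set a : Fin r → EuclideanSpace ℝ (Fin r) :=
    fun i => (WithLp.equiv 2 (Fin r → ℝ)).symm
      ((Real.sqrt (μs i))⁻¹ • (H *ᵥ fun t => qb i t)) with ha
  have ha_apply : ∀ i t, a i t = (Real.sqrt (μs i))⁻¹ * (H *ᵥ fun t => qb i t) t :=
    fun i t => rfl
  have hsqrt_ne : ∀ i : Fin r, μs i ≠ 0 → Real.sqrt (μs i) ≠ 0 := by
    intro i hi
    rw [Real.sqrt_ne_zero' ]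
    exact lt_of_le_of_ne (hμ_nonneg i) (Ne.symm hi)
  have hHq : ∀ i j, (H *ᵥ fun t => qb i t) ⬝ᵥ (H *ᵥ fun t => qb j t)
      = if i = j then μs j else 0 := by
    intro i j
    rw [gram_dot, ← hSdef, heig j, dotProduct_smul, hqb_dot]
    by_cases h : i = j <;> simp [h]
  have horth : Orthonormal ℝ (Set.restrict {i | μs i ≠ 0} a) := by
    rw [orthonormal_iff_ite]
    rintro ⟨i, hi⟩ ⟨j, hj⟩
    have hdot : (inner ℝ (a i) (a j) : ℝ)
        = (Real.sqrt (μs i))⁻¹ * ((Real.sqrt (μs j))⁻¹ *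
          ((H *ᵥ fun t => qb i t) ⬝ᵥ (H *ᵥ fun t => qb j t))) := by
      rw [euc_inner_eq]
      simp only [ha_apply]
      rw [show ((fun t => (Real.sqrt (μs i))⁻¹ * (H *ᵥ fun t => qb i t) t) ⬝ᵥ
          fun t => (Real.sqrt (μs j))⁻¹ * (H *ᵥ fun t => qb j t) t)
          = ((Real.sqrt (μs i))⁻¹ • (H *ᵥ fun t => qb i t)) ⬝ᵥ
            ((Real.sqrt (μs j))⁻¹ • (H *ᵥ fun t => qb j t)) from rfl]
      rw [smul_dotProduct, dotProduct_smul]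
      simp [smul_eq_mul]
    have hij : (⟨i, hi⟩ : {i | μs i ≠ 0}) = ⟨j, hj⟩ ↔ i = j := by
      simp [Subtype.ext_iff]
    by_cases h : i = j
    · subst h
      change inner ℝ (a i) (a i) = _
      simp only [Set.restrict_apply, hdot, hHq, if_pos rfl, hij, if_pos rfl, if_true]
      have hμpos : 0 < μs i := lt_of_le_of_ne (hμ_nonneg i) (Ne.symm hi)
      rw [← Real.sqrt_mul_self (le_of_lt hμpos)]
      field_simp
      rw [Real.sq_sqrt (Real.sqrt_nonneg _)]
    · change inner ℝ (a i) (a j) = _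
      simp only [Set.restrict_apply, hdot, hHq, if_neg h, hij, if_neg h]
      simp
  -- extend to an orthonormal basis
  obtain ⟨b, hb⟩ := horth.exists_orthonormalBasis_extension_of_card_eq (by simp)
  have hb_dot : ∀ i j, (fun t => b i t) ⬝ᵥ (fun t => b j t) = if i = j then 1 else 0 := by
    intro i j
    rw [← euc_inner_eq]
    have := b.orthonormal
    rw [orthonormal_iff_ite] at this
    simpa using this i j
  -- the orthogonal factors
  set Q : Matrix (Fin r) (Fin r) ℝ := Matrix.of fun i j => qb j i with hQ
  set P : Matrix (Fin r) (Fin r) ℝ := Matrix.of fun i j => b j i with hP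
  have hQtQ : Qᵀ * Q = 1 := by
    ext i j
    rw [Matrix.mul_apply, Matrix.one_apply]
    simpa [hQ, dotProduct] using hqb_dot i j
  have hPtP : Pᵀ * P = 1 := by
    ext i j
    rw [Matrix.mul_apply, Matrix.one_apply]
    simpa [hP, dotProduct] using hb_dot i j
  have hQQt : Q * Qᵀ = 1 := mul_eq_one_comm.mp hQtQ
  have hPPt : P * Pᵀ = 1 := mul_eq_one_comm.mp hPtP
  set D : Matrix (Fin r) (Fin r) ℝ := Matrix.diagonal (fun i => Real.sqrt (μs i)) with hD
  have hHQ : H * Q = P * D := by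
    ext i j
    rw [Matrix.mul_diagonal]
    have hl : (H * Q) i j = (H *ᵥ fun t => qb j t) i := by
      rw [Matrix.mul_apply]
      simp [hQ, Matrix.mulVec, dotProduct]
    rw [hl]
    by_cases h : μs j = 0
    · have hzero : (H *ᵥ fun t => qb j t) = 0 := by
        have := hHq j j
        rw [if_pos rfl, h] at this
        exact (dotProduct_self_eq_zero).mp this
      rw [hzero]
      simp [hP, h]
    · have hbj : b j = a j := hb j h
      have : P i j = a j i := by simp [hP, hbj]
      rw [this, ha_apply]
      field_simp [hsqrt_ne j h]
  have hH : H = P * D * Qᵀ := by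
    calc H = H * (Q * Qᵀ) := by rw [hQQt, Matrix.mul_one]
    _ = (H * Q) * Qᵀ := by rw [Matrix.mul_assoc]
    _ = P * D * Qᵀ := by rw [hHQ]
  have hDt : Dᵀ = D := by rw [hD, Matrix.diagonal_transpose]
  refine ⟨P * Qᵀ, μs j₀, fun t => qb j₀ t, ?_, hdotSelf j₀, heig j₀, hμ_nonneg j₀, ?_⟩
  · rw [Matrix.transpose_mul, Matrix.transpose_transpose]
    rw [Matrix.mul_assoc Q, ← Matrix.mul_assoc Pᵀ, hPtP, Matrix.one_mul, hQQt]
  · have hHtO : Hᵀ * (P * Qᵀ) = Q * D * Qᵀ := by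
      rw [hH, Matrix.transpose_mul, Matrix.transpose_mul, Matrix.transpose_transpose, hDt]
      simp only [Matrix.mul_assoc]
      rw [← Matrix.mul_assoc Pᵀ P, hPtP, Matrix.one_mul]
    have hOtH : (P * Qᵀ)ᵀ * H = Q * D * Qᵀ := by
      rw [hH, Matrix.transpose_mul, Matrix.transpose_transpose]
      simp only [Matrix.mul_assoc]
      rw [← Matrix.mul_assoc Pᵀ P, hPtP, Matrix.one_mul]
    set e : Fin r → ℝ := fun i => 2 - 2 * Real.sqrt (μs i) with he
    have h1 : Matrix.diagonal e = (2:ℝ) • (1 : Matrix (Fin r) (Fin r) ℝ) - D - D := by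
      ext i j
      by_cases h : i = j
      · subst h
        simp [he, hD, Matrix.diagonal_apply_eq, Matrix.one_apply_eq]
        ring
      · simp [he, hD, Matrix.diagonal_apply_ne _ h, Matrix.one_apply_ne h]
    have h2 : (2:ℝ) • (1 : Matrix (Fin r) (Fin r) ℝ)
        = Q * ((2:ℝ) • (1 : Matrix (Fin r) (Fin r) ℝ)) * Qᵀ := by
      rw [Matrix.mul_smul, Matrix.mul_one, Matrix.smul_mul, hQQt]
    have hG : (2:ℝ) • (1 : Matrix (Fin r) (Fin r) ℝ) - Hᵀ * (P * Qᵀ) - (P * Qᵀ)ᵀ * H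
        = Q * Matrix.diagonal e * Qᵀ := by
      rw [hHtO, hOtH, h1]
      conv_lhs => rw [h2]
      rw [← sub_mul, ← sub_mul, ← mul_sub, ← mul_sub]
    intro v
    rw [hG]
    have hvw : v ⬝ᵥ ((Q * Matrix.diagonal e * Qᵀ) *ᵥ v)
        = (Qᵀ *ᵥ v) ⬝ᵥ (Matrix.diagonal e *ᵥ (Qᵀ *ᵥ v)) := by
      rw [← Matrix.mulVec_mulVec, ← Matrix.mulVec_mulVec, dotProduct_comm, mulVec_dot',
        dotProduct_comm]
    rw [hvw]
    set w := Qᵀ *ᵥ v with hw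
    have hww : w ⬝ᵥ w = v ⬝ᵥ v := by
      rw [hw, gram_dot, Matrix.transpose_transpose, hQQt, Matrix.one_mulVec]
    have hbound : w ⬝ᵥ (Matrix.diagonal e *ᵥ w) ≤ (2 - 2 * Real.sqrt (μs j₀)) * (w ⬝ᵥ w) := by
      simp only [dotProduct]
      rw [Finset.mul_sum]
      refine Finset.sum_le_sum fun i _ => ?_
      rw [Matrix.mulVec_diagonal]
      have hei : e i ≤ 2 - 2 * Real.sqrt (μs j₀) := by
        have := Real.sqrt_le_sqrt (hj₀ i)
        simp only [he]
        linarith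
      calc w i * (e i * w i) = e i * (w i * w i) := by ring
      _ ≤ (2 - 2 * Real.sqrt (μs j₀)) * (w i * w i) :=
        mul_le_mul_of_nonneg_right hei (mul_self_nonneg _)
    rw [hww] at hbound
    exact hbound


lemma colsOrtho {n m : ℕ} (f : Fin m → Fin n → ℝ)
    (hf : ∀ k l : Fin m, f k ⬝ᵥ f l = if k = l then 1 else 0) :
    (Matrix.of fun i k => f k i)ᵀ * (Matrix.of fun i k => f k i) = 1 := by
  ext k l
  have h0 : ((Matrix.of fun i k => f k i)ᵀ * (Matrix.of fun i k => f k i)) k l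
      = f k ⬝ᵥ f l := by
    simp [Matrix.mul_apply, dotProduct]
  rw [h0, hf, Matrix.one_apply]

lemma eig_mul {n m : ℕ} (M : Matrix (Fin n) (Fin n) ℝ) (f : Fin m → Fin n → ℝ) (d : Fin m → ℝ)
    (hf : ∀ k, M *ᵥ f k = d k • f k) :
    M * (Matrix.of fun i k => f k i) = (Matrix.of fun i k => f k i) * Matrix.diagonal d := by
  ext i k
  rw [Matrix.mul_diagonal]
  have h := congrFun (hf k) i
  simp only [Matrix.mulVec, dotProduct, Pi.smul_apply, smul_eq_mul] at h
  have h0 : (M * Matrix.of fun i k => f k i) i k = ∑ j, M i j * f k j := by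
    simp [Matrix.mul_apply]
  rw [h0, h, Matrix.of_apply, mul_comm]

end DKaux

open DKaux in
/-- Davis–Kahan type bound: if `M, M'` are symmetric `n × n` real matrices with orthonormal
eigenbases `u` (eigenvalues `lam`) and `u'` (eigenvalues `θ`), both ordered by decreasing
absolute value, and the gap `|θ_r| - |θ_{r+1}| - ‖M - M'‖` is positive, then there is an
orthogonal `r × r` matrix `O` with
`‖U - U' O‖ ≤ √2 ‖M - M'‖ / (|θ_r| - |θ_{r+1}| - ‖M - M'‖)`, where `U` (resp. `U'`) has as
columns the first `r` eigenvectors of `M` (resp. `M'`). -/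
theorem davis_kahan_sin_theta (n r : ℕ) (hr : 1 ≤ r) (hrn : r < n)
    (M M' : Matrix (Fin n) (Fin n) ℝ) (hM : M.IsSymm) (hM' : M'.IsSymm)
    (lam θ : Fin n → ℝ) (u u' : Fin n → Fin n → ℝ)
    (hlam_dec : ∀ i j : Fin n, i ≤ j → |lam j| ≤ |lam i|)
    (hθ_dec : ∀ i j : Fin n, i ≤ j → |θ j| ≤ |θ i|)
    (hu_orth : ∀ k l : Fin n, u k ⬝ᵥ u l = if k = l then 1 else 0)
    (hu'_orth : ∀ k l : Fin n, u' k ⬝ᵥ u' l = if k = l then 1 else 0)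
    (hu_eig : ∀ k : Fin n, M.mulVec (u k) = lam k • u k)
    (hu'_eig : ∀ k : Fin n, M'.mulVec (u' k) = θ k • u' k)
    (hgap : 0 < |θ ⟨r - 1, by omega⟩| - |θ ⟨r, hrn⟩| - ‖M - M'‖) :
    ∃ O : Matrix (Fin r) (Fin r) ℝ, Oᵀ * O = 1 ∧
      ‖(Matrix.of fun (i : Fin n) (k : Fin r) => u (Fin.castLE hrn.le k) i) -
        (Matrix.of fun (i : Fin n) (k : Fin r) => u' (Fin.castLE hrn.le k) i) * O‖ ≤
      Real.sqrt 2 * ‖M - M'‖ / (|θ ⟨r - 1, by omega⟩| - |θ ⟨r, hrn⟩| - ‖M - M'‖) := by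
  classical
  set E := ‖M - M'‖ with hEdef
  have hE0 : 0 ≤ E := norm_nonneg _
  set i₁ : Fin n := ⟨r - 1, by omega⟩ with hi₁
  set i₂ : Fin n := ⟨r, hrn⟩ with hi₂
  set δ := |θ i₁| - |θ i₂| - E with hδdef
  have hδ : 0 < δ := hgap
  set ρ := |θ i₂| with hρdef
  have hρ0 : 0 ≤ ρ := abs_nonneg _
  -- matrices
  set Umat := (Matrix.of fun (i : Fin n) (k : Fin r) => u (Fin.castLE hrn.le k) i) with hUdef
  set U'mat := (Matrix.of fun (i : Fin n) (k : Fin r) => u' (Fin.castLE hrn.le k) i) with hU'def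
  set Wu := (Matrix.of fun (i : Fin n) (k : Fin n) => u k i) with hWdef
  set Wu' := (Matrix.of fun (i : Fin n) (k : Fin n) => u' k i) with hW'def
  set V := (Matrix.of fun (i : Fin n) (l : Fin (n - r)) => u' ⟨r + l.val, by omega⟩ i) with hVdef
  -- orthogonality of columns
  have hUtU : Umatᵀ * Umat = 1 := by
    refine colsOrtho _ fun k l => ?_
    rw [hu_orth]
    exact if_congr (by simp [Fin.ext_iff]) rfl rfl
  have hU'tU' : U'matᵀ * U'mat = 1 := by
    refine colsOrtho _ fun k l => ?_
    rw [hu'_orth]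
    exact if_congr (by simp [Fin.ext_iff]) rfl rfl
  have hWtW : Wuᵀ * Wu = 1 := colsOrtho _ hu_orth
  have hW'tW' : Wu'ᵀ * Wu' = 1 := colsOrtho _ hu'_orth
  have hWWt : Wu * Wuᵀ = 1 := mul_eq_one_comm.mp hWtW
  have hW'W't : Wu' * Wu'ᵀ = 1 := mul_eq_one_comm.mp hW'tW'
  have hVtV : Vᵀ * V = 1 := by
    refine colsOrtho _ fun k l => ?_
    rw [hu'_orth]
    refine if_congr ?_ rfl rfl
    simp only [Fin.ext_iff]
    omega
  -- eigen-relations in matrix form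
  set d₁ : Fin r → ℝ := fun k => lam (Fin.castLE hrn.le k) with hd₁def
  set d₂ : Fin (n - r) → ℝ := fun l => θ ⟨r + l.val, by omega⟩ with hd₂def
  have hMU : M * Umat = Umat * Matrix.diagonal d₁ :=
    eig_mul M _ _ fun k => hu_eig (Fin.castLE hrn.le k)
  have hM'V : M' * V = V * Matrix.diagonal d₂ :=
    eig_mul M' _ _ fun l => hu'_eig ⟨r + l.val, by omega⟩
  have hMW : M * Wu = Wu * Matrix.diagonal lam := eig_mul M _ _ hu_eig
  have hM'W : M' * Wu' = Wu' * Matrix.diagonal θ := eig_mul M' _ _ hu'_eig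
  have hVM' : Vᵀ * M' = Matrix.diagonal d₂ * Vᵀ := by
    have := congrArg Matrix.transpose hM'V
    rw [Matrix.transpose_mul, Matrix.transpose_mul, Matrix.diagonal_transpose, hM'.eq] at this
    exact this
  -- the B and X matrices
  set B := Vᵀ * Umat with hBdef
  set X := Vᵀ * (M - M') * Umat with hXdef
  have hsyl_eq : B * Matrix.diagonal d₁ - Matrix.diagonal d₂ * B = X := by
    rw [hBdef, hXdef, Matrix.mul_assoc Vᵀ Umat, ← hMU, ← Matrix.mul_assoc Vᵀ M Umat,
      ← Matrix.mul_assoc (Matrix.diagonal d₂) Vᵀ Umat, ← hVM', Matrix.mul_sub, Matrix.sub_mul]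
  -- ‖X‖ ≤ E
  have hVt_contract : ∀ w : Fin n → ℝ, (Vᵀ *ᵥ w) ⬝ᵥ (Vᵀ *ᵥ w) ≤ w ⬝ᵥ w := by
    intro w
    have h1 : w ⬝ᵥ w = (Wu'ᵀ *ᵥ w) ⬝ᵥ (Wu'ᵀ *ᵥ w) := by
      rw [gram_dot, Matrix.transpose_transpose, hW'W't, Matrix.one_mulVec]
    have h2 : (Wu'ᵀ *ᵥ w) ⬝ᵥ (Wu'ᵀ *ᵥ w)
        = ∑ j : Fin n, (u' j ⬝ᵥ w) * (u' j ⬝ᵥ w) := by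
      simp [dotProduct, Matrix.mulVec, Matrix.transpose_apply, hW'def]
    have h3 : (Vᵀ *ᵥ w) ⬝ᵥ (Vᵀ *ᵥ w)
        = ∑ l : Fin (n - r), (u' ⟨r + l.val, by omega⟩ ⬝ᵥ w) * (u' ⟨r + l.val, by omega⟩ ⬝ᵥ w) := by
      simp [dotProduct, Matrix.mulVec, Matrix.transpose_apply, hVdef]
    rw [h1, h2, h3, fin_split hrn.le (fun j => (u' j ⬝ᵥ w) * (u' j ⬝ᵥ w))]
    exact le_add_of_nonneg_left (Finset.sum_nonneg fun k _ => mul_self_nonneg _)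
  have hXnorm : ‖X‖ ≤ E := by
    refine norm_le_of _ hE0 fun v => ?_
    have h1 : X *ᵥ v = Vᵀ *ᵥ ((M - M') *ᵥ (Umat *ᵥ v)) := by
      rw [hXdef, ← Matrix.mulVec_mulVec, ← Matrix.mulVec_mulVec]
    rw [h1]
    refine (hVt_contract _).trans ?_
    refine (mulVec_dot_le _ _).trans ?_
    rw [isometry_dot Umat hUtU]
  -- Weyl-type inequality
  have hWeyl : |θ i₁| - E ≤ |lam i₁| := by
    set T : Matrix (Fin r) (Fin r) ℝ := Matrix.of fun k j =>
      if _ : (k : ℕ) < r - 1 then u ⟨k.val, by omega⟩ ⬝ᵥ u' (Fin.castLE hrn.le j) else 0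
      with hTdef
    have hTdet : T.det = 0 := by
      refine Matrix.det_eq_zero_of_row_eq_zero ⟨r - 1, by omega⟩ fun j => ?_
      simp [hTdef]
    obtain ⟨bv, hbv0, hbv⟩ := (Matrix.exists_mulVec_eq_zero_iff).mpr hTdet
    have hconstraint : ∀ k : Fin n, (k : ℕ) < r - 1 →
        ∑ j : Fin r, (u k ⬝ᵥ u' (Fin.castLE hrn.le j)) * bv j = 0 := by
      intro k hk
      have h1 := congrFun hbv ⟨k.val, by omega⟩
      simp only [Matrix.mulVec, dotProduct, Pi.zero_apply] at h1
      rw [← h1]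
      refine Finset.sum_congr rfl fun j _ => ?_
      congr 1
      rw [hTdef]
      simp only [Matrix.of_apply]
      rw [dif_pos (show ((⟨k.val, by omega⟩ : Fin r) : ℕ) < r - 1 from hk)]
    set bx : Fin n → ℝ := fun l => if h : (l : ℕ) < r then bv ⟨l.val, h⟩ else 0 with hbxdef
    set x := Wu' *ᵥ bx with hxdef
    have hβpos : 0 < bx ⬝ᵥ bx := by
      rcases Function.ne_iff.mp hbv0 with ⟨j, hj⟩
      have hbxne : bx ≠ 0 := by
        intro h
        apply hj
        have h2 := congrFun h ⟨j.val, by omega⟩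
        simpa [hbxdef, j.isLt] using h2
      rcases lt_or_eq_of_le (dot_nonneg bx) with h | h
      · exact h
      · exact absurd (dotProduct_self_eq_zero.mp h.symm) hbxne
    have hxx : x ⬝ᵥ x = bx ⬝ᵥ bx := isometry_dot Wu' hW'tW' bx
    have hM'x : (M' *ᵥ x) ⬝ᵥ (M' *ᵥ x)
        = (Matrix.diagonal θ *ᵥ bx) ⬝ᵥ (Matrix.diagonal θ *ᵥ bx) := by
      rw [hxdef, Matrix.mulVec_mulVec, hM'W, ← Matrix.mulVec_mulVec,
        isometry_dot Wu' hW'tW']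
    have hM'x_low : |θ i₁|^2 * (bx ⬝ᵥ bx) ≤ (M' *ᵥ x) ⬝ᵥ (M' *ᵥ x) := by
      rw [hM'x]
      simp only [dotProduct, Matrix.mulVec_diagonal]
      rw [Finset.mul_sum]
      refine Finset.sum_le_sum fun l _ => ?_
      by_cases hl : (l : ℕ) < r
      · have hle : |θ i₁| ≤ |θ l| := hθ_dec l i₁ (by rw [Fin.le_def, hi₁]; simpa using by omega)
        have hsq : |θ i₁| * |θ i₁| ≤ θ l * θ l := by
          calc |θ i₁| * |θ i₁| ≤ |θ l| * |θ l| :=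
                mul_le_mul hle hle (abs_nonneg _) (abs_nonneg _)
          _ = θ l * θ l := abs_mul_abs_self _
        nlinarith [hsq, mul_self_nonneg (bx l)]
      · have hz : bx l = 0 := by rw [hbxdef]; simp [hl]
        simp [hz]
    set cx := Wuᵀ *ᵥ x with hcxdef
    have hxWu : x = Wu *ᵥ cx := by
      rw [hcxdef, Matrix.mulVec_mulVec, hWWt, Matrix.one_mulVec]
    have hcc : cx ⬝ᵥ cx = bx ⬝ᵥ bx := by
      rw [hcxdef, gram_dot, Matrix.transpose_transpose, hWWt, Matrix.one_mulVec, hxx]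
    have hcx0 : ∀ k : Fin n, (k : ℕ) < r - 1 → cx k = 0 := by
      intro k hk
      have h1 : cx k = ∑ l : Fin n, bx l * (u k ⬝ᵥ u' l) := by
        calc cx k = ∑ i, u k i * x i := by
              simp [hcxdef, Matrix.mulVec, dotProduct, hWdef]
        _ = ∑ i, u k i * (∑ l, u' l i * bx l) := by
              refine Finset.sum_congr rfl fun i _ => ?_
              have hxi : x i = ∑ l, u' l i * bx l := by
                rw [hxdef]
                simp [Matrix.mulVec, dotProduct, hW'def]
              rw [hxi]
        _ = ∑ i, ∑ l, u k i * (u' l i * bx l) := by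
              exact Finset.sum_congr rfl fun i _ => Finset.mul_sum _ _ _
        _ = ∑ l, ∑ i, u k i * (u' l i * bx l) := Finset.sum_comm
        _ = ∑ l, bx l * (u k ⬝ᵥ u' l) := by
              refine Finset.sum_congr rfl fun l _ => ?_
              rw [dotProduct, Finset.mul_sum]
              exact Finset.sum_congr rfl fun i _ => by ring
      rw [h1, fin_split hrn.le (fun l => bx l * (u k ⬝ᵥ u' l))]
      have h2 : ∑ l : Fin (n - r),
          bx ⟨r + l.val, by omega⟩ * (u k ⬝ᵥ u' ⟨r + l.val, by omega⟩) = 0 := by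
        refine Finset.sum_eq_zero fun l _ => ?_
        have hnl : ¬ ((r : ℕ) + l.val < r) := by omega
        rw [hbxdef]
        simp [hnl]
      have h3 : ∑ j : Fin r,
          bx ⟨j.val, lt_of_lt_of_le j.isLt hrn.le⟩
            * (u k ⬝ᵥ u' ⟨j.val, lt_of_lt_of_le j.isLt hrn.le⟩)
          = ∑ j : Fin r, (u k ⬝ᵥ u' (Fin.castLE hrn.le j)) * bv j := by
        refine Finset.sum_congr rfl fun j _ => ?_
        have hb : bx ⟨j.val, lt_of_lt_of_le j.isLt hrn.le⟩ = bv j := by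
          rw [hbxdef]
          simp only
          rw [dif_pos (show (j : ℕ) < r from j.isLt)]
        rw [hb, mul_comm]
        congr 1
      rw [h2, h3, hconstraint k hk, add_zero]
    have hMx : (M *ᵥ x) ⬝ᵥ (M *ᵥ x)
        = (Matrix.diagonal lam *ᵥ cx) ⬝ᵥ (Matrix.diagonal lam *ᵥ cx) := by
      conv_lhs => rw [hxWu]
      rw [Matrix.mulVec_mulVec, hMW, ← Matrix.mulVec_mulVec, isometry_dot Wu hWtW]
    have hMx_up : (M *ᵥ x) ⬝ᵥ (M *ᵥ x) ≤ |lam i₁|^2 * (bx ⬝ᵥ bx) := by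
      rw [hMx, ← hcc]
      simp only [dotProduct, Matrix.mulVec_diagonal]
      rw [Finset.mul_sum]
      refine Finset.sum_le_sum fun k _ => ?_
      by_cases hk : (k : ℕ) < r - 1
      · rw [hcx0 k hk]
        simp [mul_self_nonneg, sq_nonneg]
      · have hle : |lam k| ≤ |lam i₁| :=
          hlam_dec i₁ k (by rw [Fin.le_def, hi₁]; simpa using by omega)
        have hsq : lam k * lam k ≤ |lam i₁| * |lam i₁| := by
          calc lam k * lam k = |lam k| * |lam k| := (abs_mul_abs_self _).symm
          _ ≤ |lam i₁| * |lam i₁| := mul_le_mul hle hle (abs_nonneg _) (abs_nonneg _)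
        nlinarith [hsq, mul_self_nonneg (cx k)]
    have htri : Real.sqrt ((M' *ᵥ x) ⬝ᵥ (M' *ᵥ x))
        ≤ Real.sqrt ((M *ᵥ x) ⬝ᵥ (M *ᵥ x))
          + Real.sqrt (((M' - M) *ᵥ x) ⬝ᵥ ((M' - M) *ᵥ x)) := by
      have hsum : M' *ᵥ x = M *ᵥ x + (M' - M) *ᵥ x := by
        rw [Matrix.sub_mulVec]
        abel
      rw [← euc_norm_eq, ← euc_norm_eq, ← euc_norm_eq, hsum]
      exact norm_add_le ((WithLp.equiv 2 (Fin n → ℝ)).symm (M *ᵥ x))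
        ((WithLp.equiv 2 (Fin n → ℝ)).symm ((M' - M) *ᵥ x))
    have hdx : Real.sqrt (((M' - M) *ᵥ x) ⬝ᵥ ((M' - M) *ᵥ x)) ≤ E * Real.sqrt (bx ⬝ᵥ bx) := by
      have h1 := mulVec_dot_le (M' - M) x
      have h2 : ‖M' - M‖ = E := by rw [hEdef, norm_sub_rev]
      rw [h2, hxx] at h1
      calc Real.sqrt (((M' - M) *ᵥ x) ⬝ᵥ ((M' - M) *ᵥ x))
          ≤ Real.sqrt (E^2 * (bx ⬝ᵥ bx)) := Real.sqrt_le_sqrt h1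
      _ = E * Real.sqrt (bx ⬝ᵥ bx) := by
          rw [Real.sqrt_mul (sq_nonneg E), Real.sqrt_sq hE0]
    have hlow : |θ i₁| * Real.sqrt (bx ⬝ᵥ bx) ≤ Real.sqrt ((M' *ᵥ x) ⬝ᵥ (M' *ᵥ x)) := by
      have h1 := Real.sqrt_le_sqrt hM'x_low
      rwa [Real.sqrt_mul (sq_nonneg _), Real.sqrt_sq_eq_abs, abs_abs] at h1
    have hup : Real.sqrt ((M *ᵥ x) ⬝ᵥ (M *ᵥ x)) ≤ |lam i₁| * Real.sqrt (bx ⬝ᵥ bx) := by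
      have h1 := Real.sqrt_le_sqrt hMx_up
      rwa [Real.sqrt_mul (sq_nonneg _), Real.sqrt_sq_eq_abs, abs_abs] at h1
    have hsβ : 0 < Real.sqrt (bx ⬝ᵥ bx) := Real.sqrt_pos.mpr hβpos
    have hchain : |θ i₁| * Real.sqrt (bx ⬝ᵥ bx)
        ≤ (|lam i₁| + E) * Real.sqrt (bx ⬝ᵥ bx) := by
      have h9 : Real.sqrt ((M *ᵥ x) ⬝ᵥ (M *ᵥ x))
          + Real.sqrt (((M' - M) *ᵥ x) ⬝ᵥ ((M' - M) *ᵥ x))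
          ≤ (|lam i₁| + E) * Real.sqrt (bx ⬝ᵥ bx) := by
        rw [add_mul]
        exact add_le_add hup hdx
      exact hlow.trans (htri.trans h9)
    have := le_of_mul_le_mul_right hchain hsβ
    linarith
  -- Sylvester: ‖B‖ ≤ E / δ
  have hd₁lb : ∀ k : Fin r, ρ + δ ≤ |d₁ k| := by
    intro k
    have hk : Fin.castLE hrn.le k ≤ i₁ := by
      rw [Fin.le_def, hi₁]
      simpa using by omega
    have h1 : |lam i₁| ≤ |lam (Fin.castLE hrn.le k)| := hlam_dec _ i₁ hk
    have h2 : ρ + δ = |θ i₁| - E := by rw [hρdef, hδdef]; ring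
    rw [h2, hd₁def]
    exact le_trans hWeyl h1
  have hd₂ub : ∀ l : Fin (n - r), |d₂ l| ≤ ρ := by
    intro l
    refine hθ_dec i₂ ⟨r + l.val, by omega⟩ ?_
    rw [Fin.le_def, hi₂]
    simp
  have hBnorm : ‖B‖ ≤ E / δ := by
    have h1 := sylvester B X d₁ d₂ hδ hρ0 hd₁lb hd₂ub hsyl_eq
    rw [le_div_iff₀ hδ]
    calc ‖B‖ * δ = δ * ‖B‖ := mul_comm _ _
    _ ≤ ‖X‖ := h1
    _ ≤ E := hXnorm
  -- Gram identity  Hᵀ H + Bᵀ B = 1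
  set H := U'matᵀ * Umat with hHdef
  have hGtG : (Wu'ᵀ * Umat)ᵀ * (Wu'ᵀ * Umat) = 1 := by
    rw [Matrix.transpose_mul, Matrix.transpose_transpose, Matrix.mul_assoc,
      ← Matrix.mul_assoc Wu' Wu'ᵀ Umat, hW'W't, Matrix.one_mul, hUtU]
  have hcolH : ∀ (j : Fin r) (k : Fin r),
      H j k = (Wu'ᵀ * Umat) ⟨j.val, lt_of_lt_of_le j.isLt hrn.le⟩ k := by
    intro j k
    simp only [hHdef, Matrix.mul_apply, hU'def, hW'def, hUdef, Matrix.transpose_apply,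
      Matrix.of_apply]
    refine Finset.sum_congr rfl fun i _ => ?_
    congr 2
  have hcolB : ∀ (l : Fin (n - r)) (k : Fin r),
      B l k = (Wu'ᵀ * Umat) ⟨r + l.val, by omega⟩ k := by
    intro l k
    simp only [hBdef, Matrix.mul_apply, hVdef, hW'def, hUdef, Matrix.transpose_apply,
      Matrix.of_apply]
  have hId : Hᵀ * H + Bᵀ * B = 1 := by
    ext k k'
    have h1 := congrFun (congrFun hGtG k) k'
    have h2 : ((Wu'ᵀ * Umat)ᵀ * (Wu'ᵀ * Umat)) k k'
        = ∑ j : Fin n, (Wu'ᵀ * Umat) j k * (Wu'ᵀ * Umat) j k' := by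
      rw [Matrix.mul_apply]
      exact Finset.sum_congr rfl fun j _ => by rw [Matrix.transpose_apply]
    rw [h2, fin_split hrn.le (fun j => (Wu'ᵀ * Umat) j k * (Wu'ᵀ * Umat) j k')] at h1
    rw [Matrix.add_apply]
    have h4 : (Hᵀ * H) k k' = ∑ j : Fin r,
        (Wu'ᵀ * Umat) ⟨j.val, lt_of_lt_of_le j.isLt hrn.le⟩ k
          * (Wu'ᵀ * Umat) ⟨j.val, lt_of_lt_of_le j.isLt hrn.le⟩ k' := by
      rw [Matrix.mul_apply]
      exact Finset.sum_congr rfl fun j _ => by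
        rw [Matrix.transpose_apply, hcolH, hcolH]
    have h5 : (Bᵀ * B) k k' = ∑ l : Fin (n - r),
        (Wu'ᵀ * Umat) ⟨r + l.val, by omega⟩ k * (Wu'ᵀ * Umat) ⟨r + l.val, by omega⟩ k' := by
      rw [Matrix.mul_apply]
      exact Finset.sum_congr rfl fun l _ => by
        rw [Matrix.transpose_apply, hcolB, hcolB]
    rw [h4, h5, h1]
  -- SVD / polar part
  obtain ⟨O, μ, qv, hOtO, hqv1, hqeig, hμ0, hquad⟩ := svd_polar (by omega : 0 < r) H
  have hμ_eq : μ = 1 - (B *ᵥ qv) ⬝ᵥ (B *ᵥ qv) := by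
    have h1 : qv ⬝ᵥ ((Hᵀ * H) *ᵥ qv) = μ := by
      rw [hqeig, dotProduct_smul, hqv1]
      simp
    have h2 : Hᵀ * H = 1 - Bᵀ * B := eq_sub_of_add_eq hId
    rw [h2, Matrix.sub_mulVec, dotProduct_sub, Matrix.one_mulVec, hqv1,
      ← gram_dot] at h1
    linarith
  have hμ_le1 : μ ≤ 1 := by
    rw [hμ_eq]
    linarith [dot_nonneg (B *ᵥ qv)]
  have hμ_ge : 1 - (E/δ)^2 ≤ μ := by
    rw [hμ_eq]
    have h1 := mulVec_dot_le B qv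
    rw [hqv1, mul_one] at h1
    have h2 : ‖B‖^2 ≤ (E/δ)^2 := pow_le_pow_left₀ (norm_nonneg B) hBnorm 2
    linarith
  -- final bound
  have hAtA : (Umat - U'mat * O)ᵀ * (Umat - U'mat * O)
      = (2:ℝ) • (1 : Matrix (Fin r) (Fin r) ℝ) - Hᵀ * O - Oᵀ * H := by
    have p0 : Umatᵀ * U'mat = Hᵀ := by
      rw [hHdef, Matrix.transpose_mul, Matrix.transpose_transpose]
    rw [Matrix.transpose_sub, Matrix.transpose_mul, Matrix.sub_mul, Matrix.mul_sub,
      Matrix.mul_sub, hUtU,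
      ← Matrix.mul_assoc Umatᵀ U'mat O, p0, Matrix.mul_assoc Oᵀ U'matᵀ Umat, ← hHdef]
    have p3 : Oᵀ * U'matᵀ * (U'mat * O) = 1 := by
      rw [Matrix.mul_assoc Oᵀ U'matᵀ (U'mat * O), ← Matrix.mul_assoc U'matᵀ U'mat O, hU'tU',
        Matrix.one_mul, hOtO]
    rw [p3, two_smul]
    abel
  have hfinal : ‖Umat - U'mat * O‖ ≤ Real.sqrt 2 * E / δ := by
    have hc0 : 0 ≤ Real.sqrt 2 * E / δ :=
      div_nonneg (mul_nonneg (Real.sqrt_nonneg 2) hE0) hδ.le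
    refine norm_le_of _ hc0 fun v => ?_
    rw [gram_dot, hAtA]
    refine (hquad v).trans ?_
    have hs : μ ≤ Real.sqrt μ := by
      have h1 : Real.sqrt μ ≤ 1 := by
        rw [show (1:ℝ) = Real.sqrt 1 by rw [Real.sqrt_one]]
        exact Real.sqrt_le_sqrt hμ_le1
      nlinarith [Real.sq_sqrt hμ0, Real.sqrt_nonneg μ]
    have hc : (Real.sqrt 2 * E / δ)^2 = 2 * (E/δ)^2 := by
      rw [mul_div_assoc, mul_pow, Real.sq_sqrt (by norm_num : (0:ℝ) ≤ 2)]
    rw [hc]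
    have h2 : 2 - 2*Real.sqrt μ ≤ 2 * (E/δ)^2 := by linarith [hμ_ge, hs]
    exact mul_le_mul_of_nonneg_right h2 (dot_nonneg v)
  exact ⟨O, hOtO, hfinal⟩
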